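/- Consider words v_0^{(n1,n2)}, v_2^{(n1,n2)}, v_4^{(n1,n2)} each of the form u_0 · u_1^{m_{i_1}} · u_2 · ... · u_{k-1} · u_k^{m_{i_k}} · u_{k+1} where each exponent m_{i_j} is n1 or n2, and fixed words w_0, w_1, w_2, w_3, w_4 with v_1, v_3 nonempty. If for all n1, n2 ∈ ℕ the equation v_0^{(n1,n2)} · v_1^{n1} · v_2^{(n1,n2)} · v_3^{n2} · v_4^{(n1,n2)} = w_0 · w_1^{n2} · w_2 · w_3^{n1} · w_4 holds, then for all n1, n2 ∈ ℕ the word v_1 · v_1^{n1} · v_2^{(n1,n2)} · v_3^{n2} · v_3 has period gcd(|v_1|, |v_3|). -/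

import Mathlib

/-- A word `w` has period `p` if letters at distance `p` coincide. -/
def HasPeriod {α : Type*} (w : List α) (p : ℕ) : Prop :=
  ∀ i, i + p < w.length → w[i]? = w[i + p]?

/-- `npow n v` is the `n`-fold repetition `v^n`. -/
def npow {α : Type*} (n : ℕ) (v : List α) : List α :=
  (List.replicate n v).flatten

/-- `iterWord base rep k e` is the word
`base 0 · (rep 0)^{e 0} · base 1 · (rep 1)^{e 1} · ... · (rep (k-1))^{e (k-1)} · base k`. -/
def iterWord {α : Type*} (base rep : ℕ → List α) (k : ℕ) (e : ℕ → ℕ) : List α :=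
  (List.range k).foldr (fun j acc => base j ++ npow (e j) (rep j) ++ acc) (base k)

/-- Selector for exponents: each exponent is either `n1` or `n2`,
as prescribed by the boolean choice `s`. -/
def sel (s : ℕ → Bool) (n1 n2 : ℕ) : ℕ → ℕ :=
  fun j => if s j then n1 else n2

namespace OWTW
variable {α : Type*}

lemma npow_zero' (v : List α) : npow 0 v = [] := rfl

lemma npow_succ' (n : ℕ) (v : List α) : npow (n+1) v = v ++ npow n v := by
  simp [npow, List.replicate_succ]

lemma npow_add' (m n : ℕ) (v : List α) : npow (m+n) v = npow m v ++ npow n v := by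
  induction m with
  | zero => rw [Nat.zero_add]; rfl
  | succ m ih => rw [Nat.succ_add, npow_succ', npow_succ', ih, List.append_assoc]

lemma length_npow (n : ℕ) (v : List α) : (npow n v).length = n * v.length := by
  induction n with
  | zero => simp [npow_zero']
  | succ n ih => rw [npow_succ']; simp [ih, Nat.succ_mul]; omega

lemma npow_get? (n s : ℕ) (v : List α) (hs : s < n * v.length) :
    (npow n v)[s]? = v[s % v.length]? := by
  induction n generalizing s with
  | zero => omega
  | succ n ih =>
    rw [npow_succ']
    by_cases h : s < v.length
    · rw [List.getElem?_append_left h, Nat.mod_eq_of_lt h]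
    · push_neg at h
      rw [List.getElem?_append_right h, ih _ (by rw [Nat.succ_mul] at hs; omega),
        Nat.mod_eq_sub_mod h]

lemma iterWord_zero (base rep : ℕ → List α) (e : ℕ → ℕ) :
    iterWord base rep 0 e = base 0 := rfl

lemma iterWord_succ (base rep : ℕ → List α) (k : ℕ) (e : ℕ → ℕ) :
    iterWord base rep (k+1) e
      = base 0 ++ npow (e 0) (rep 0) ++
        iterWord (fun j => base (j+1)) (fun j => rep (j+1)) k (fun j => e (j+1)) := by
  unfold iterWord
  rw [List.range_succ_eq_map, List.foldr_cons, List.foldr_map]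

lemma iter_len (base rep : ℕ → List α) (s : ℕ → Bool) :
    ∀ k, ∃ a0 a1 a2 : ℕ, ∀ x y,
      (iterWord base rep k (sel s x y)).length = a0 + a1*x + a2*y := by
  intro k
  induction k generalizing base rep s with
  | zero => exact ⟨(base 0).length, 0, 0, fun x y => by simp [iterWord_zero]⟩
  | succ k ih =>
    obtain ⟨a0, a1, a2, hA⟩ := ih (fun j => base (j+1)) (fun j => rep (j+1)) (fun j => s (j+1))
    by_cases h0 : s 0
    · refine ⟨a0 + (base 0).length, a1 + (rep 0).length, a2, fun x y => ?_⟩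
      rw [iterWord_succ,
        show (fun j => sel s x y (j+1)) = sel (fun j => s (j+1)) x y from rfl]
      simp only [List.length_append, length_npow]
      rw [hA]
      simp only [sel, h0, if_true]
      ring
    · refine ⟨a0 + (base 0).length, a1, a2 + (rep 0).length, fun x y => ?_⟩
      rw [iterWord_succ,
        show (fun j => sel s x y (j+1)) = sel (fun j => s (j+1)) x y from rfl]
      simp only [List.length_append, length_npow]
      rw [hA]
      simp only [sel, h0, Bool.false_eq_true, if_false]
      ring

lemma get_pre (pre mid post : List α) (s : ℕ) (hs : s < mid.length) :
    (pre ++ (mid ++ post))[pre.length + s]? = mid[s]? := by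
  rw [List.getElem?_append_right (by omega)]
  simp only [Nat.add_sub_cancel_left]
  rw [List.getElem?_append_left hs]

lemma chain (f : ℕ → Option α) (S E d : ℕ)
    (hstep : ∀ i, S ≤ i → i + d < E → f i = f (i+d)) :
    ∀ k a, S ≤ a → a + k*d < E → f a = f (a + k*d) := by
  intro k
  induction k with
  | zero => intro a _ _; simp
  | succ k ih =>
    intro a ha hb
    rw [show (k+1)*d = k*d + d from by ring] at hb
    have h1 : a + d < E :=
      lt_of_le_of_lt (Nat.add_le_add_left (Nat.le_add_left d (k*d)) a) hb
    have h2 := hstep a ha h1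
    rw [show a + (k*d + d) = (a + d) + k*d from by ring] at hb
    have h3 := ih (a+d) (le_trans ha (Nat.le_add_right _ _)) hb
    rw [h2, h3, show (k+1)*d = k*d + d from by ring,
      show a + (k*d + d) = (a + d) + k*d from by ring]

lemma eqMod (f : ℕ → Option α) (S E d : ℕ)
    (hstep : ∀ i, S ≤ i → i + d < E → f i = f (i+d)) :
    ∀ a b, S ≤ a → S ≤ b → a < E → b < E → a % d = b % d → f a = f b := by
  suffices h : ∀ a b, a ≤ b → S ≤ a → b < E → a % d = b % d → f a = f b by
    intro a b ha hb ha' hb' hm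
    rcases le_total a b with h'|h'
    · exact h a b h' ha hb' hm
    · exact (h b a h' hb ha' hm.symm).symm
  intro a b hab ha hb hm
  have hdvd : d ∣ b - a := (Nat.modEq_iff_dvd' hab).mp hm
  obtain ⟨c, hc⟩ := hdvd
  have hb2 : b = a + d * c := by rw [← hc, Nat.add_sub_cancel' hab]
  rw [hb2, Nat.mul_comm d c] at hb ⊢
  exact chain f S E d hstep c a ha hb

lemma gcd_sub' (p q : ℕ) (h : p ≤ q) : Nat.gcd p (q - p) = Nat.gcd p q := by
  apply Nat.dvd_antisymm
  · apply Nat.dvd_gcd (Nat.gcd_dvd_left _ _)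
    have h1 := Nat.gcd_dvd_left p (q-p)
    have h2 := Nat.gcd_dvd_right p (q-p)
    have h3 := Nat.dvd_add h2 h1
    rwa [Nat.sub_add_cancel h] at h3
  · apply Nat.dvd_gcd (Nat.gcd_dvd_left _ _)
    exact Nat.dvd_sub (Nat.gcd_dvd_right _ _) (Nat.gcd_dvd_left _ _)

lemma fw_rel (f : ℕ → Option α) (S E : ℕ) :
    ∀ (n p q : ℕ), 0 < p → 0 < q → p + q ≤ n → S + p + q ≤ E →
    (∀ i, S ≤ i → i + p < E → f i = f (i+p)) →
    (∀ i, S ≤ i → i + q < E → f i = f (i+q)) →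
    ∀ i, S ≤ i → i + Nat.gcd p q < E → f i = f (i + Nat.gcd p q) := by
  intro n
  induction n with
  | zero => intro p q hp hq hn; omega
  | succ n ih =>
    intro p q hp hq hn hSE hP hQ
    rcases lt_trichotomy p q with h|h|h
    · have hQ' : ∀ i, S ≤ i → i + (q - p) < E → f i = f (i + (q-p)) := by
        intro i hi hiE
        by_cases hc : i + q < E
        · have h1 := hQ i hi hc
          have h2 := hP (i + (q - p)) (le_trans hi (Nat.le_add_right _ _)) (by omega)
          rw [show i + (q-p) + p = i + q from by omega] at h2
          rw [h1, h2]
        · push_neg at hc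
          have h1 := hP (i - p) (by omega) (by omega)
          rw [show i - p + p = i from by omega] at h1
          have h2 := hQ (i - p) (by omega) (by omega)
          rw [show i - p + q = i + (q-p) from by omega] at h2
          rw [← h1, h2]
      rw [← gcd_sub' p q (le_of_lt h)]
      exact ih p (q-p) hp (by omega) (by omega) (by omega) hP hQ'
    · subst h
      rw [Nat.gcd_self]
      exact hP
    · have hP' : ∀ i, S ≤ i → i + (p - q) < E → f i = f (i + (p-q)) := by
        intro i hi hiE
        by_cases hc : i + p < E
        · have h1 := hP i hi hc
          have h2 := hQ (i + (p - q)) (le_trans hi (Nat.le_add_right _ _)) (by omega)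
          rw [show i + (p-q) + q = i + p from by omega] at h2
          rw [h1, h2]
        · push_neg at hc
          have h1 := hQ (i - q) (by omega) (by omega)
          rw [show i - q + q = i from by omega] at h1
          have h2 := hP (i - q) (by omega) (by omega)
          rw [show i - q + p = i + (p-q) from by omega] at h2
          rw [← h1, h2]
      rw [← Nat.gcd_comm q p, ← gcd_sub' q p (le_of_lt h), Nat.gcd_comm]
      exact ih (p-q) q (by omega) hq (by omega) (by omega) hP' hQ

lemma iter_match (f : ℕ → Option α) (g S E : ℕ)
    (hEq : ∀ a b, S ≤ a → S ≤ b → a < E → b < E → a % g = b % g → f a = f b) :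
    ∀ (k : ℕ) (base rep : ℕ → List α) (e e' : ℕ → ℕ) (π : ℕ),
    (∀ j, e j ≤ e' j) → (∀ j, e j % g = e' j % g) →
    S ≤ π → π + (iterWord base rep k e').length ≤ E →
    (∀ s, s < (iterWord base rep k e').length → f (π + s) = (iterWord base rep k e')[s]?) →
    ∀ s t, s < (iterWord base rep k e).length → S ≤ t → t < E → t % g = (π + s) % g →
    (iterWord base rep k e)[s]? = f t := by
  intro k
  induction k with
  | zero =>
    intro base rep e e' π hmono hmod hπ hπE hmatch s t hs ht htE htm
    simp only [iterWord_zero] at hs hπE hmatch ⊢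
    rw [← hmatch s hs]
    exact (hEq t (π+s) ht (le_trans hπ (Nat.le_add_right _ _)) htE (by omega) htm).symm
  | succ k ih =>
    intro base rep e e' π hmono hmod hπ hπE hmatch s t hs ht htE htm
    simp only [iterWord_succ] at hs hπE hmatch ⊢
    set Y := iterWord (fun j => base (j+1)) (fun j => rep (j+1)) k (fun j => e (j+1)) with hY
    set Y' := iterWord (fun j => base (j+1)) (fun j => rep (j+1)) k (fun j => e' (j+1)) with hY'
    simp only [List.append_assoc] at hmatch ⊢
    simp only [List.length_append, length_npow] at hs hπE hmatch
    have hmul : e 0 * (rep 0).length ≤ e' 0 * (rep 0).length :=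
      Nat.mul_le_mul_right _ (hmono 0)
    by_cases hcase : s < (base 0).length + e 0 * (rep 0).length
    · have hXX' : (base 0 ++ (npow (e 0) (rep 0) ++ Y))[s]?
          = (base 0 ++ (npow (e' 0) (rep 0) ++ Y'))[s]? := by
        by_cases h1 : s < (base 0).length
        · rw [List.getElem?_append_left h1, List.getElem?_append_left h1]
        · push_neg at h1
          have h2 : s - (base 0).length < e 0 * (rep 0).length := by omega
          have h3 : s - (base 0).length < e' 0 * (rep 0).length := by omega
          rw [List.getElem?_append_right h1, List.getElem?_append_right h1,
              List.getElem?_append_left (by rw [length_npow]; omega),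
              List.getElem?_append_left (by rw [length_npow]; omega),
              npow_get? _ _ _ h2, npow_get? _ _ _ h3]
      rw [hXX', ← hmatch s (by omega)]
      exact (hEq t (π+s) ht (le_trans hπ (Nat.le_add_right _ _)) htE (by omega) htm).symm
    · push_neg at hcase
      set s3 := s - ((base 0).length + e 0 * (rep 0).length) with hs3
      have hs3Y : s3 < Y.length := by omega
      have hXY : (base 0 ++ (npow (e 0) (rep 0) ++ Y))[s]? = Y[s3]? := by
        rw [List.getElem?_append_right (show (base 0).length ≤ s from by omega),
            List.getElem?_append_right (show (npow (e 0) (rep 0)).length ≤ s - (base 0).length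
              from by rw [length_npow]; omega),
            length_npow]
        congr 1
        omega
      rw [hXY]
      have hmatch' : ∀ u, u < Y'.length →
          f ((π + ((base 0).length + e' 0 * (rep 0).length)) + u) = Y'[u]? := by
        intro u hu
        have h1 := hmatch ((base 0).length + e' 0 * (rep 0).length + u) (by omega)
        rw [show π + ((base 0).length + e' 0 * (rep 0).length + u)
              = π + ((base 0).length + e' 0 * (rep 0).length) + u from by ring] at h1
        rw [h1,
            List.getElem?_append_right (show (base 0).length ≤
              (base 0).length + e' 0 * (rep 0).length + u from by omega),
            List.getElem?_append_right (show (npow (e' 0) (rep 0)).length ≤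
              (base 0).length + e' 0 * (rep 0).length + u - (base 0).length
              from by rw [length_npow]; omega),
            length_npow]
        congr 1
        omega
      refine ih (fun j => base (j+1)) (fun j => rep (j+1)) (fun j => e (j+1)) (fun j => e' (j+1))
        (π + ((base 0).length + e' 0 * (rep 0).length)) (fun j => hmono (j+1)) (fun j => hmod (j+1))
        (le_trans hπ (Nat.le_add_right _ _)) (by rw [← hY']; omega) hmatch' s3 t hs3Y ht htE ?_
      have hm0 : e 0 * (rep 0).length % g = e' 0 * (rep 0).length % g :=
        Nat.ModEq.mul_right _ (hmod 0)
      have h4 : (π + s) % g = (π + ((base 0).length + e' 0 * (rep 0).length) + s3) % g := by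
        rw [show π + s = (π + (base 0).length + s3) + e 0 * (rep 0).length from by omega,
            show π + ((base 0).length + e' 0 * (rep 0).length) + s3
              = (π + (base 0).length + s3) + e' 0 * (rep 0).length from by ring]
        exact Nat.ModEq.add_left _ hm0
      omega

end OWTW

/-- Word equation lemma: the parametrized words `v_0^{(n1,n2)}`, `v_2^{(n1,n2)}`,
`v_4^{(n1,n2)}` have the shape `u_0 · u_1^{m_{i_1}} · ... · u_k^{m_{i_k}} · u_{k+1}`
with each exponent equal to `n1` or `n2`.  If for all `n1, n2` the equation
`v_0^{(n1,n2)} · v_1^{n1} · v_2^{(n1,n2)} · v_3^{n2} · v_4^{(n1,n2)}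
  = w_0 · w_1^{n2} · w_2 · w_3^{n1} · w_4` holds (with `v_1, v_3` nonempty),
then for all `n1, n2` the word `v_1 · v_1^{n1} · v_2^{(n1,n2)} · v_3^{n2} · v_3`
has period `gcd(|v_1|, |v_3|)`. -/
theorem oneway_vs_twoway_word_equation {α : Type*}
    (b0 r0 b2 r2 b4 r4 : ℕ → List α) (k0 k2 k4 : ℕ) (s0 s2 s4 : ℕ → Bool)
    (v1 v3 w0 w1 w2 w3 w4 : List α)
    (hv1 : v1 ≠ []) (hv3 : v3 ≠ [])
    (heq : ∀ n1 n2 : ℕ,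
      iterWord b0 r0 k0 (sel s0 n1 n2) ++ npow n1 v1 ++
        iterWord b2 r2 k2 (sel s2 n1 n2) ++ npow n2 v3 ++
        iterWord b4 r4 k4 (sel s4 n1 n2)
      = w0 ++ npow n2 w1 ++ w2 ++ npow n1 w3 ++ w4) :
    ∀ n1 n2 : ℕ,
      HasPeriod
        (v1 ++ npow n1 v1 ++ iterWord b2 r2 k2 (sel s2 n1 n2) ++ npow n2 v3 ++ v3)
        (Nat.gcd v1.length v3.length) := by
  intro n1 n2
  have hp : 0 < v1.length := List.length_pos_iff.mpr hv1
  have hq : 0 < v3.length := List.length_pos_iff.mpr hv3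
  set g := Nat.gcd v1.length v3.length with hgdef
  have hg : 0 < g := Nat.gcd_pos_of_pos_left _ hp
  have hgle : g ≤ v1.length := Nat.le_of_dvd hp (Nat.gcd_dvd_left _ _)
  obtain ⟨aa0, aa1, aa2, hLA⟩ := OWTW.iter_len b0 r0 s0 k0
  obtain ⟨bb0, bb1, bb2, hLB⟩ := OWTW.iter_len b2 r2 s2 k2
  obtain ⟨cc0, cc1, cc2, hLC⟩ := OWTW.iter_len b4 r4 s4 k4
  have hlen : ∀ x y : ℕ,
      (aa0 + aa1*x + aa2*y) + x*v1.length + (bb0 + bb1*x + bb2*y) + y*v3.length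
        + (cc0 + cc1*x + cc2*y)
      = w0.length + y*w1.length + w2.length + x*w3.length + w4.length := by
    intro x y
    have h := congrArg List.length (heq x y)
    simp only [List.length_append, OWTW.length_npow, hLA, hLB, hLC] at h
    omega
  have hP1 : w1.length = aa2 + bb2 + cc2 + v3.length := by
    have h1 := hlen 0 0
    have h2 := hlen 0 1
    omega
  have hP1pos : 0 < w1.length := by omega
  -- choose large parameters m1 ≡ n1, m2 ≡ n2 (mod g)
  set t1 := w0.length + w1.length + v1.length + 1 with ht1
  set m1 := n1 + g * t1 with hm1def
  set t2 := aa0 + aa1*m1 + m1*v1.length + bb0 + bb1*m1 + (n2+1)*v3.length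
            + w1.length + v1.length + v3.length + 1 with ht2
  set m2 := n2 + g * t2 with hm2def
  have hm1mod : m1 % g = n1 % g := Nat.add_mul_mod_self_left n1 g t1
  have hm2mod : m2 % g = n2 % g := Nat.add_mul_mod_self_left n2 g t2
  have hgt1 : t1 ≤ g * t1 := Nat.le_mul_of_pos_left t1 hg
  have hgt2 : t2 ≤ g * t2 := Nat.le_mul_of_pos_left t2 hg
  have hn1m : n1 + 1 ≤ m1 := by omega
  have hn2m : n2 + 1 ≤ m2 := by omega
  -- instantiate at the big parameters
  have hR := heq m1 m2
  have hLAm := hLA m1 m2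
  have hLBm := hLB m1 m2
  have hLBn := hLB n1 n2
  set A' := iterWord b0 r0 k0 (sel s0 m1 m2) with hA'
  set B' := iterWord b2 r2 k2 (sel s2 m1 m2) with hB'
  set Bn := iterWord b2 r2 k2 (sel s2 n1 n2) with hBn
  set C' := iterWord b4 r4 k4 (sel s4 m1 m2) with hC'
  set L := A' ++ npow m1 v1 ++ B' ++ npow m2 v3 ++ C' with hLdef
  set f : ℕ → Option α := fun i => L[i]? with hf
  -- numeric bridging facts
  have hmulm1p : m1 ≤ m1 * v1.length := Nat.le_mul_of_pos_right m1 hp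
  have hmulm2q : m2 ≤ m2 * v3.length := Nat.le_mul_of_pos_right m2 hq
  have hm2P1 : m2 * w1.length = aa2*m2 + bb2*m2 + cc2*m2 + m2*v3.length := by
    rw [hP1]; ring
  have hsplitp : (m1-n1-1)*v1.length + (n1+1)*v1.length = m1*v1.length := by
    rw [← Nat.add_mul]; congr 1; omega
  have hn1p : (n1+1)*v1.length = v1.length + n1*v1.length := by ring
  have hn2q : (n2+1)*v3.length = n2*v3.length + v3.length := by ring
  have hq1 : v3.length ≤ (n2+1)*v3.length := Nat.le_mul_of_pos_left _ (by omega)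
  have hmulm1n : (m1-n1-1) ≤ (m1-n1-1)*v1.length := Nat.le_mul_of_pos_right _ hp
  have hVA : A'.length = aa0 + aa1*m1 + aa2*m2 := hLAm
  have hVB : B'.length = bb0 + bb1*m1 + bb2*m2 := hLBm
  have hVBn : Bn.length = bb0 + bb1*n1 + bb2*n2 := hLBn
  -- key inequalities
  have hN1 : w1.length + v1.length + w0.length ≤ m1 * v1.length := by omega
  have hN3 : aa0 + aa1*m1 + aa2*m2 + m1*v1.length ≤ w0.length + m2*w1.length := by omega
  have hN4 : aa0 + aa1*m1 + aa2*m2 + m1*v1.length + (bb0 + bb1*m1 + bb2*m2)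
      + (n2+1)*v3.length + w1.length ≤ w0.length + m2*w1.length := by omega
  have hN5 : w1.length + v3.length ≤ m2*v3.length := by omega
  have hN6 : v1.length + v3.length ≤ m2*w1.length := by omega
  -- letter access lemmas
  have hfR : ∀ s, s < m2 * w1.length → f (w0.length + s) = w1[s % w1.length]? := by
    intro s hs
    show L[(_ : ℕ)]? = _
    rw [hR]
    rw [List.getElem?_append_left (by simp only [List.length_append, OWTW.length_npow]; omega),
        List.getElem?_append_left (by simp only [List.length_append, OWTW.length_npow]; omega),
        List.getElem?_append_left (by simp only [List.length_append, OWTW.length_npow]; omega),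
        List.getElem?_append_right (by omega),
        show w0.length + s - w0.length = s from by omega]
    exact OWTW.npow_get? m2 s w1 hs
  have hfA : ∀ s, s < m1 * v1.length → f (A'.length + s) = v1[s % v1.length]? := by
    intro s hs
    show L[(_ : ℕ)]? = _
    rw [hLdef]
    rw [List.getElem?_append_left (by simp only [List.length_append, OWTW.length_npow]; omega),
        List.getElem?_append_left (by simp only [List.length_append, OWTW.length_npow]; omega),
        List.getElem?_append_left (by simp only [List.length_append, OWTW.length_npow]; omega),
        List.getElem?_append_right (by omega),
        show A'.length + s - A'.length = s from by omega]
    exact OWTW.npow_get? m1 s v1 hs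
  have hfQ : ∀ s, s < m2 * v3.length →
      f (A'.length + m1*v1.length + B'.length + s) = v3[s % v3.length]? := by
    intro s hs
    show L[(_ : ℕ)]? = _
    rw [hLdef]
    rw [List.getElem?_append_left (by simp only [List.length_append, OWTW.length_npow]; omega),
        List.getElem?_append_right (by simp only [List.length_append, OWTW.length_npow]; omega)]
    have e1 : (A' ++ npow m1 v1 ++ B').length = A'.length + m1*v1.length + B'.length := by
      simp only [List.length_append, OWTW.length_npow]
    rw [show A'.length + m1*v1.length + B'.length + s - (A' ++ npow m1 v1 ++ B').length
          = s from by rw [e1]; omega]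
    exact OWTW.npow_get? m2 s v3 hs
  -- region has period |w1|
  have hstep1 : ∀ i, w0.length ≤ i → i + w1.length < w0.length + m2*w1.length →
      f i = f (i + w1.length) := by
    intro i hi hiE
    have h1 := hfR (i - w0.length) (by omega)
    have h2 := hfR (i - w0.length + w1.length) (by omega)
    rw [show w0.length + (i - w0.length) = i from by omega] at h1
    rw [show w0.length + (i - w0.length + w1.length) = i + w1.length from by omega] at h2
    rw [h1, h2, Nat.add_mod_right]
  have hEq1 := OWTW.eqMod f w0.length (w0.length + m2*w1.length) w1.length hstep1
  -- window inside the v1-power block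
  set u : ℕ := A'.length + (m1*v1.length - (w1.length + v1.length)) with hu
  have hwin1 : ∀ i, u ≤ i → i < u + w1.length → f i = f (i + v1.length) := by
    intro i hi1 hi2
    have h1 := hfA (i - A'.length) (by omega)
    have h2 := hfA (i - A'.length + v1.length) (by omega)
    rw [show A'.length + (i - A'.length) = i from by omega] at h1
    rw [show A'.length + (i - A'.length + v1.length) = i + v1.length from by omega] at h2
    rw [h1, h2, Nat.add_mod_right]
  -- region has period |v1|
  have hstepP : ∀ i, w0.length ≤ i → i + v1.length < w0.length + m2*w1.length →
      f i = f (i + v1.length) := by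
    intro i hi hiE
    set c := u + ((i + w1.length*(u+1) - u) % w1.length) with hc
    have hu1 : u + 1 ≤ w1.length * (u+1) := Nat.le_mul_of_pos_left (u+1) hP1pos
    have hmlt : (i + w1.length*(u+1) - u) % w1.length < w1.length := Nat.mod_lt _ hP1pos
    have hcm : c % w1.length = i % w1.length := by
      have h6 : c % w1.length = (u + (i + w1.length*(u+1) - u)) % w1.length :=
        Nat.ModEq.add_left u (Nat.mod_modEq _ _)
      rw [h6, show u + (i + w1.length*(u+1) - u) = i + w1.length*(u+1) from by omega,
          Nat.add_mul_mod_self_left]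
    have hcE : c + v1.length < w0.length + m2*w1.length := by omega
    have h1 : f i = f c := hEq1 i c hi (by omega) (by omega) (by omega) hcm.symm
    have h2 : f (i + v1.length) = f (c + v1.length) :=
      hEq1 _ _ (by omega) (by omega) hiE hcE
        (Nat.ModEq.add_right v1.length (Nat.ModEq.symm hcm))
    calc f i = f c := h1
      _ = f (c + v1.length) := hwin1 c (by omega) (by omega)
      _ = f (i + v1.length) := h2.symm
  -- window inside the v3-power block
  have hwin3 : ∀ i, A'.length + m1*v1.length + B'.length ≤ i →
      i < A'.length + m1*v1.length + B'.length + w1.length → f i = f (i + v3.length) := by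
    intro i hi1 hi2
    have h1 := hfQ (i - (A'.length + m1*v1.length + B'.length)) (by omega)
    have h2 := hfQ (i - (A'.length + m1*v1.length + B'.length) + v3.length) (by omega)
    rw [show A'.length + m1*v1.length + B'.length
          + (i - (A'.length + m1*v1.length + B'.length)) = i from by omega] at h1
    rw [show A'.length + m1*v1.length + B'.length
          + (i - (A'.length + m1*v1.length + B'.length) + v3.length)
          = i + v3.length from by omega] at h2
    rw [h1, h2, Nat.add_mod_right]
  -- region has period |v3|
  have hstepQ : ∀ i, w0.length ≤ i → i + v3.length < w0.length + m2*w1.length →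
      f i = f (i + v3.length) := by
    intro i hi hiE
    set u' : ℕ := A'.length + m1*v1.length + B'.length with hu'
    set c := u' + ((i + w1.length*(u'+1) - u') % w1.length) with hc
    have hu1 : u' + 1 ≤ w1.length * (u'+1) := Nat.le_mul_of_pos_left (u'+1) hP1pos
    have hmlt : (i + w1.length*(u'+1) - u') % w1.length < w1.length := Nat.mod_lt _ hP1pos
    have hcm : c % w1.length = i % w1.length := by
      have h6 : c % w1.length = (u' + (i + w1.length*(u'+1) - u')) % w1.length :=
        Nat.ModEq.add_left u' (Nat.mod_modEq _ _)
      rw [h6, show u' + (i + w1.length*(u'+1) - u') = i + w1.length*(u'+1) from by omega,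
          Nat.add_mul_mod_self_left]
    have hcE : c + v3.length < w0.length + m2*w1.length := by omega
    have h1 : f i = f c := hEq1 i c hi (by omega) (by omega) (by omega) hcm.symm
    have h2 : f (i + v3.length) = f (c + v3.length) :=
      hEq1 _ _ (by omega) (by omega) hiE hcE
        (Nat.ModEq.add_right v3.length (Nat.ModEq.symm hcm))
    calc f i = f c := h1
      _ = f (c + v3.length) := hwin3 c (by omega) (by omega)
      _ = f (i + v3.length) := h2.symm
  -- region has period g = gcd
  have hstepG : ∀ i, w0.length ≤ i → i + g < w0.length + m2*w1.length → f i = f (i + g) := by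
    have h := OWTW.fw_rel f w0.length (w0.length + m2*w1.length)
      (v1.length + v3.length) v1.length v3.length hp hq le_rfl (by omega) hstepP hstepQ
    rw [← hgdef] at h
    exact h
  have hEqG := OWTW.eqMod f w0.length (w0.length + m2*w1.length) g hstepG
  -- decompose L around the distinguished factor M'
  have hsuccr : npow (n2+1) v3 = npow n2 v3 ++ v3 := by
    rw [OWTW.npow_add']
    simp [OWTW.npow_succ', OWTW.npow_zero']
  have hsplit1 : npow m1 v1 = npow (m1-n1-1) v1 ++ (v1 ++ npow n1 v1) := by
    rw [← OWTW.npow_succ', ← OWTW.npow_add']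
    congr 1
    omega
  have hsplit3 : npow m2 v3 = (npow n2 v3 ++ v3) ++ npow (m2-n2-1) v3 := by
    rw [← hsuccr, ← OWTW.npow_add']
    congr 1
    omega
  set M' := v1 ++ npow n1 v1 ++ B' ++ npow n2 v3 ++ v3 with hM'
  set Mn := v1 ++ npow n1 v1 ++ Bn ++ npow n2 v3 ++ v3 with hMn
  set π := A'.length + (m1-n1-1)*v1.length with hπ
  have hLdec : L = (A' ++ npow (m1-n1-1) v1) ++ (M' ++ (npow (m2-n2-1) v3 ++ C')) := by
    rw [hLdef, hM', hsplit1, hsplit3]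
    simp [List.append_assoc]
  have hM'len : M'.length = v1.length + n1*v1.length + B'.length + n2*v3.length + v3.length := by
    rw [hM']
    simp only [List.length_append, OWTW.length_npow]
  have hMnlen : Mn.length = v1.length + n1*v1.length + Bn.length + n2*v3.length + v3.length := by
    rw [hMn]
    simp only [List.length_append, OWTW.length_npow]
  have hπM : π + M'.length ≤ w0.length + m2*w1.length := by omega
  have hπS : w0.length ≤ π := by omega
  have hmatchM : ∀ s, s < M'.length → f (π + s) = M'[s]? := by
    intro s hs
    show L[π + s]? = _
    rw [hLdec]
    have hpre : (A' ++ npow (m1-n1-1) v1).length = π := by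
      rw [hπ]
      simp only [List.length_append, OWTW.length_npow]
    rw [← hpre]
    exact OWTW.get_pre _ _ _ s hs
  have hshapeMn : Mn = (v1 ++ npow n1 v1) ++ (Bn ++ (npow n2 v3 ++ v3)) := by
    rw [hMn]; simp [List.append_assoc]
  have hshapeM' : M' = (v1 ++ npow n1 v1) ++ (B' ++ (npow n2 v3 ++ v3)) := by
    rw [hM']; simp [List.append_assoc]
  have hHlen : (v1 ++ npow n1 v1).length = v1.length + n1*v1.length := by
    simp only [List.length_append, OWTW.length_npow]
  -- the master claim
  have hclaim : ∀ s t, s < Mn.length → w0.length ≤ t → t < w0.length + m2*w1.length →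
      t % g = (π + s) % g → Mn[s]? = f t := by
    intro s t hs ht htE htm
    by_cases hc1 : s < v1.length + n1*v1.length
    · -- inside the head v1-power (shared by Mn and M')
      have e1 : Mn[s]? = (v1 ++ npow n1 v1)[s]? := by
        rw [hshapeMn]
        exact List.getElem?_append_left (by rw [hHlen]; omega)
      have e2 : M'[s]? = (v1 ++ npow n1 v1)[s]? := by
        rw [hshapeM']
        exact List.getElem?_append_left (by rw [hHlen]; omega)
      rw [e1, ← e2, ← hmatchM s (by omega)]
      exact (hEqG t (π+s) ht (by omega) htE (by omega) htm).symm
    · push_neg at hc1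
      by_cases hc2 : s < v1.length + n1*v1.length + Bn.length
      · -- inside the parametrized middle block
        set s2' := s - (v1.length + n1*v1.length) with hs2'
        have e1 : Mn[s]? = Bn[s2']? := by
          rw [hshapeMn, List.getElem?_append_right (by rw [hHlen]; omega), hHlen,
              List.getElem?_append_left (by omega)]
        have hmatchB : ∀ u', u' < B'.length →
            f ((π + (v1.length + n1*v1.length)) + u') = B'[u']? := by
          intro u' hu'
          have h1 := hmatchM (v1.length + n1*v1.length + u') (by omega)
          rw [show π + (v1.length + n1*v1.length + u')
                = π + (v1.length + n1*v1.length) + u' from by ring] at h1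
          rw [h1, hshapeM', List.getElem?_append_right (by rw [hHlen]; omega), hHlen,
              show v1.length + n1*v1.length + u' - (v1.length + n1*v1.length) = u'
                from by omega,
              List.getElem?_append_left hu']
        have hmono : ∀ j, sel s2 n1 n2 j ≤ sel s2 m1 m2 j := by
          intro j; unfold sel; split <;> omega
        have hmodsel : ∀ j, (sel s2 n1 n2 j) % g = (sel s2 m1 m2 j) % g := by
          intro j
          unfold sel
          split
          · exact hm1mod.symm
          · exact hm2mod.symm
        have hkey := OWTW.iter_match f g w0.length (w0.length + m2*w1.length) hEqG k2 b2 r2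
          (sel s2 n1 n2) (sel s2 m1 m2) (π + (v1.length + n1*v1.length)) hmono hmodsel
          (by omega) (by rw [← hB']; omega) (by rw [← hB']; exact hmatchB) s2' t
          (by rw [← hBn]; omega) ht htE
          (by rw [show π + (v1.length + n1*v1.length) + s2' = π + s from by omega]; exact htm)
        rw [e1, hBn]
        exact hkey
      · -- inside the tail v3-power (shared by Mn and M')
        push_neg at hc2
        set s3 := s - (v1.length + n1*v1.length) - Bn.length with hs3
        have hs3T : s3 < n2*v3.length + v3.length := by omega
        have e1 : Mn[s]? = (npow n2 v3 ++ v3)[s3]? := by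
          rw [hshapeMn, List.getElem?_append_right (by rw [hHlen]; omega), hHlen,
              List.getElem?_append_right (by omega)]
        have hBmodeq : Bn.length % g = B'.length % g := by
          rw [hVBn, hVB]
          exact Nat.ModEq.add (Nat.ModEq.add (Nat.ModEq.refl bb0)
            (Nat.ModEq.mul_left bb1 (Nat.ModEq.symm hm1mod)))
            (Nat.ModEq.mul_left bb2 (Nat.ModEq.symm hm2mod))
        have e2 : f (π + (v1.length + n1*v1.length) + B'.length + s3)
            = (npow n2 v3 ++ v3)[s3]? := by
          have h1 := hmatchM (v1.length + n1*v1.length + B'.length + s3) (by omega)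
          rw [show π + (v1.length + n1*v1.length + B'.length + s3)
                = π + (v1.length + n1*v1.length) + B'.length + s3 from by ring] at h1
          rw [h1, hshapeM', List.getElem?_append_right (by rw [hHlen]; omega), hHlen,
              List.getElem?_append_right (by omega)]
          congr 1
          omega
        have hmodT : t % g = (π + (v1.length + n1*v1.length) + B'.length + s3) % g := by
          have e3 : π + s = π + (v1.length + n1*v1.length) + s3 + Bn.length := by omega
          have e4 : π + (v1.length + n1*v1.length) + B'.length + s3
              = π + (v1.length + n1*v1.length) + s3 + B'.length := by ring
          have e5 : (π + (v1.length + n1*v1.length) + s3 + Bn.length) % g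
              = (π + (v1.length + n1*v1.length) + s3 + B'.length) % g :=
            Nat.ModEq.add_left _ hBmodeq
          rw [e4, ← e5, ← e3]
          exact htm
        rw [e1, ← e2]
        exact (hEqG t _ ht (by omega) htE (by omega) hmodT).symm
  -- conclude
  intro i hi
  have hb1 : i % g < g := Nat.mod_lt _ hg
  have hMg : g ≤ M'.length := by omega
  have k1 := hclaim i (π + i % g) (by omega) (by omega) (by omega)
    (Nat.ModEq.add_left π (Nat.mod_modEq i g))
  have k2 := hclaim (i+g) (π + i % g) hi (by omega) (by omega)
    (by rw [show π + (i+g) = π + i + g from by ring, Nat.add_mod_right]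
        exact Nat.ModEq.add_left π (Nat.mod_modEq i g))
  rw [k1, k2]
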